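/- Let A be a finite nonempty subset of ℤ². Define the edge boundary ∂A as the set of pairs (x,y) with x ∈ A, y ∉ A, and x − y ∈ {(±1,0),(0,±1)}. Then |∂A| ≥ 4·√|A|. -/

import Mathlib

/-- The edge boundary of a subset of `ℤ²`: pairs `(x, y)` with `x ∈ A`, `y ∉ A`,
adjacent in the grid lattice. -/
def edgeBoundary (A : Set (ℤ × ℤ)) : Set ((ℤ × ℤ) × (ℤ × ℤ)) :=
  {p | p.1 ∈ A ∧ p.2 ∉ A ∧
    p.1 - p.2 ∈ ({(1, 0), (-1, 0), (0, 1), (0, -1)} : Set (ℤ × ℤ))}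

lemma stmt_8_aux (r c e a : ℕ) (hsc : a ≤ c * r) (he : 2 * r + 2 * c ≤ e) :
    ((e : ℝ)) ≥ 4 * Real.sqrt a := by
  have hr : (0 : ℝ) ≤ (r : ℝ) := Nat.cast_nonneg _
  have hc : (0 : ℝ) ≤ (c : ℝ) := Nat.cast_nonneg _
  have hsqrt1 : Real.sqrt (a : ℝ) ≤ Real.sqrt ((c : ℝ) * r) :=
    Real.sqrt_le_sqrt (by exact_mod_cast hsc)
  have hsqrt2 : Real.sqrt ((c : ℝ) * r) = Real.sqrt c * Real.sqrt r :=
    Real.sqrt_mul hc _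
  have hc2 : Real.sqrt (c : ℝ) ^ 2 = (c : ℝ) := Real.sq_sqrt hc
  have hr2 : Real.sqrt (r : ℝ) ^ 2 = (r : ℝ) := Real.sq_sqrt hr
  have ham : 2 * (Real.sqrt c * Real.sqrt r) ≤ (c : ℝ) + r := by
    nlinarith [sq_nonneg (Real.sqrt (c : ℝ) - Real.sqrt (r : ℝ))]
  have he' : (2 * r + 2 * c : ℝ) ≤ (e : ℝ) := by exact_mod_cast he
  rw [ge_iff_le]
  calc 4 * Real.sqrt (a : ℝ)
      ≤ 4 * (Real.sqrt c * Real.sqrt r) := by rw [← hsqrt2]; linarith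
    _ ≤ 2 * ((c : ℝ) + r) := by linarith
    _ ≤ (e : ℝ) := by linarith

set_option maxHeartbeats 1000000 in
theorem stmt_8 (A : Set (ℤ × ℤ)) (hfin : A.Finite) (hne : A.Nonempty) :
    ((edgeBoundary A).ncard : ℝ) ≥ 4 * Real.sqrt A.ncard := by
  classical
  have hEfin : (edgeBoundary A).Finite := by
    have hsub : edgeBoundary A ⊆
        ⋃ d ∈ ({(1, 0), (-1, 0), (0, 1), (0, -1)} : Set (ℤ × ℤ)),
          (fun a => (a, a - d)) '' A := by
      rintro ⟨p1, p2⟩ ⟨h1, h2, h3⟩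
      exact Set.mem_biUnion h3 ⟨p1, h1, by simp [Prod.ext_iff]⟩
    exact Set.Finite.subset
      (Set.Finite.biUnion (Set.toFinite _) (fun d _ => hfin.image _)) hsub
  set s := hfin.toFinset with hs
  set E := hEfin.toFinset with hE
  set R := s.image Prod.snd with hR
  set C := s.image Prod.fst with hC
  set E1 := E.filter (fun p => p.1 - p.2 = ((1 : ℤ), (0 : ℤ))) with hE1
  set E2 := E.filter (fun p => p.1 - p.2 = ((-1 : ℤ), (0 : ℤ))) with hE2
  set E3 := E.filter (fun p => p.1 - p.2 = ((0 : ℤ), (1 : ℤ))) with hE3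
  set E4 := E.filter (fun p => p.1 - p.2 = ((0 : ℤ), (-1 : ℤ))) with hE4
  have hmemE : ∀ p, p ∈ E ↔ p ∈ edgeBoundary A := fun p => hEfin.mem_toFinset
  have hmems : ∀ p, p ∈ s ↔ p ∈ A := fun p => hfin.mem_toFinset
  -- rows give E1 and E2
  have h1 : R.card ≤ E1.card := by
    apply Finset.card_le_card_of_surjOn (fun p => p.1.2)
    intro y hy
    simp only [Finset.coe_image, Set.mem_image, Finset.mem_coe, hR] at hy
    obtain ⟨q, hq, hqy⟩ := hy
    have hT : ((s.filter (fun p => p.2 = y)).image Prod.fst).Nonempty :=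
      ⟨q.1, Finset.mem_image.2 ⟨q, Finset.mem_filter.2 ⟨hq, hqy⟩, rfl⟩⟩
    set m := ((s.filter (fun p => p.2 = y)).image Prod.fst).min' hT with hm
    have hmmem := Finset.min'_mem _ hT
    rw [Finset.mem_image] at hmmem
    obtain ⟨p, hp, hpm⟩ := hmmem
    have hpmem : (m, y) ∈ A := by
      obtain ⟨hps, hpy⟩ := Finset.mem_filter.1 hp
      rw [hm, ← hpm, ← hpy]
      exact (hmems p).1 hps
    have hnot : (m - 1, y) ∉ A := by
      intro h
      have : m - 1 ∈ (s.filter (fun p => p.2 = y)).image Prod.fst :=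
        Finset.mem_image.2 ⟨(m - 1, y), Finset.mem_filter.2 ⟨(hmems _).2 h, rfl⟩, rfl⟩
      have := Finset.min'_le _ _ this
      omega
    refine ⟨((m, y), (m - 1, y)), ?_, rfl⟩
    simp only [Finset.mem_coe, hE1, Finset.mem_filter, hmemE]
    refine ⟨⟨hpmem, hnot, ?_⟩, ?_⟩
    · left; simp [Prod.ext_iff]
    · simp [Prod.ext_iff]
  have h2 : R.card ≤ E2.card := by
    apply Finset.card_le_card_of_surjOn (fun p => p.1.2)
    intro y hy
    simp only [Finset.coe_image, Set.mem_image, Finset.mem_coe, hR] at hy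
    obtain ⟨q, hq, hqy⟩ := hy
    have hT : ((s.filter (fun p => p.2 = y)).image Prod.fst).Nonempty :=
      ⟨q.1, Finset.mem_image.2 ⟨q, Finset.mem_filter.2 ⟨hq, hqy⟩, rfl⟩⟩
    set m := ((s.filter (fun p => p.2 = y)).image Prod.fst).max' hT with hm
    have hmmem := Finset.max'_mem _ hT
    rw [Finset.mem_image] at hmmem
    obtain ⟨p, hp, hpm⟩ := hmmem
    have hpmem : (m, y) ∈ A := by
      obtain ⟨hps, hpy⟩ := Finset.mem_filter.1 hp
      rw [hm, ← hpm, ← hpy]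
      exact (hmems p).1 hps
    have hnot : (m + 1, y) ∉ A := by
      intro h
      have : m + 1 ∈ (s.filter (fun p => p.2 = y)).image Prod.fst :=
        Finset.mem_image.2 ⟨(m + 1, y), Finset.mem_filter.2 ⟨(hmems _).2 h, rfl⟩, rfl⟩
      have := Finset.le_max' _ _ this
      omega
    refine ⟨((m, y), (m + 1, y)), ?_, rfl⟩
    simp only [Finset.mem_coe, hE2, Finset.mem_filter, hmemE]
    refine ⟨⟨hpmem, hnot, ?_⟩, ?_⟩
    · right; left; simp [Prod.ext_iff]
    · simp [Prod.ext_iff]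
  have h3 : C.card ≤ E3.card := by
    apply Finset.card_le_card_of_surjOn (fun p => p.1.1)
    intro x hx
    simp only [Finset.coe_image, Set.mem_image, Finset.mem_coe, hC] at hx
    obtain ⟨q, hq, hqx⟩ := hx
    have hT : ((s.filter (fun p => p.1 = x)).image Prod.snd).Nonempty :=
      ⟨q.2, Finset.mem_image.2 ⟨q, Finset.mem_filter.2 ⟨hq, hqx⟩, rfl⟩⟩
    set m := ((s.filter (fun p => p.1 = x)).image Prod.snd).min' hT with hm
    have hmmem := Finset.min'_mem _ hT
    rw [Finset.mem_image] at hmmem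
    obtain ⟨p, hp, hpm⟩ := hmmem
    have hpmem : (x, m) ∈ A := by
      obtain ⟨hps, hpy⟩ := Finset.mem_filter.1 hp
      rw [hm, ← hpm, ← hpy]
      exact (hmems p).1 hps
    have hnot : (x, m - 1) ∉ A := by
      intro h
      have : m - 1 ∈ (s.filter (fun p => p.1 = x)).image Prod.snd :=
        Finset.mem_image.2 ⟨(x, m - 1), Finset.mem_filter.2 ⟨(hmems _).2 h, rfl⟩, rfl⟩
      have := Finset.min'_le _ _ this
      omega
    refine ⟨((x, m), (x, m - 1)), ?_, rfl⟩
    simp only [Finset.mem_coe, hE3, Finset.mem_filter, hmemE]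
    refine ⟨⟨hpmem, hnot, ?_⟩, ?_⟩
    · right; right; left; simp [Prod.ext_iff]
    · simp [Prod.ext_iff]
  have h4 : C.card ≤ E4.card := by
    apply Finset.card_le_card_of_surjOn (fun p => p.1.1)
    intro x hx
    simp only [Finset.coe_image, Set.mem_image, Finset.mem_coe, hC] at hx
    obtain ⟨q, hq, hqx⟩ := hx
    have hT : ((s.filter (fun p => p.1 = x)).image Prod.snd).Nonempty :=
      ⟨q.2, Finset.mem_image.2 ⟨q, Finset.mem_filter.2 ⟨hq, hqx⟩, rfl⟩⟩
    set m := ((s.filter (fun p => p.1 = x)).image Prod.snd).max' hT with hm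
    have hmmem := Finset.max'_mem _ hT
    rw [Finset.mem_image] at hmmem
    obtain ⟨p, hp, hpm⟩ := hmmem
    have hpmem : (x, m) ∈ A := by
      obtain ⟨hps, hpy⟩ := Finset.mem_filter.1 hp
      rw [hm, ← hpm, ← hpy]
      exact (hmems p).1 hps
    have hnot : (x, m + 1) ∉ A := by
      intro h
      have : m + 1 ∈ (s.filter (fun p => p.1 = x)).image Prod.snd :=
        Finset.mem_image.2 ⟨(x, m + 1), Finset.mem_filter.2 ⟨(hmems _).2 h, rfl⟩, rfl⟩
      have := Finset.le_max' _ _ this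
      omega
    refine ⟨((x, m), (x, m + 1)), ?_, rfl⟩
    simp only [Finset.mem_coe, hE4, Finset.mem_filter, hmemE]
    refine ⟨⟨hpmem, hnot, ?_⟩, ?_⟩
    · right; right; right; simp [Prod.ext_iff]
    · simp [Prod.ext_iff]
  -- disjointness
  have hdisj : ∀ (a b : ℤ × ℤ), a ≠ b →
      Disjoint (E.filter (fun p => p.1 - p.2 = a)) (E.filter (fun p => p.1 - p.2 = b)) := by
    intro a b hab
    simp only [Finset.disjoint_left, Finset.mem_filter]
    rintro p ⟨_, ha⟩ ⟨_, hb⟩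
    exact hab (ha ▸ hb ▸ rfl)
  have d12 : Disjoint E1 E2 := hdisj _ _ (by decide)
  have d13 : Disjoint E1 E3 := hdisj _ _ (by decide)
  have d14 : Disjoint E1 E4 := hdisj _ _ (by decide)
  have d23 : Disjoint E2 E3 := hdisj _ _ (by decide)
  have d24 : Disjoint E2 E4 := hdisj _ _ (by decide)
  have d34 : Disjoint E3 E4 := hdisj _ _ (by decide)
  have hcards : E1.card + E2.card + E3.card + E4.card ≤ E.card := by
    have hsub : E1 ∪ E2 ∪ E3 ∪ E4 ⊆ E := by
      intro p hp
      simp only [Finset.mem_union, hE1, hE2, hE3, hE4, Finset.mem_filter] at hp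
      rcases hp with ((⟨h, _⟩ | ⟨h, _⟩) | ⟨h, _⟩) | ⟨h, _⟩ <;> exact h
    calc E1.card + E2.card + E3.card + E4.card
        = (E1 ∪ E2 ∪ E3 ∪ E4).card := by
          rw [Finset.card_union_of_disjoint, Finset.card_union_of_disjoint,
            Finset.card_union_of_disjoint d12]
          · exact Finset.disjoint_union_left.2 ⟨d13, d23⟩
          · exact Finset.disjoint_union_left.2
              ⟨Finset.disjoint_union_left.2 ⟨d14, d24⟩, d34⟩
      _ ≤ E.card := Finset.card_le_card hsub
  have hEge : 2 * R.card + 2 * C.card ≤ E.card := by omega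
  -- |A| ≤ |C| * |R|
  have hsc : s.card ≤ C.card * R.card := by
    calc s.card ≤ (C ×ˢ R).card := by
          apply Finset.card_le_card
          intro p hp
          rw [Finset.mem_product]
          exact ⟨Finset.mem_image_of_mem _ hp, Finset.mem_image_of_mem _ hp⟩
      _ = C.card * R.card := Finset.card_product _ _
  have hAn : A.ncard = s.card := by rw [hs]; exact Set.ncard_eq_toFinset_card A hfin
  have hEn : (edgeBoundary A).ncard = E.card := by rw [hE]; exact Set.ncard_eq_toFinset_card _ hEfin
  rw [hAn, hEn]
  exact stmt_8_aux R.card C.card E.card s.card hsc hEge
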